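/- Let D be a 2-(v,k,λ) design with block multiset B. If the block set of D can be partitioned into ρ classes, each of which covers every point exactly α times (an α-resolvable design), and ρ ≥ 2, then there exists a function f from the blocks of D to {-2,-1,1,2} such that for every point x, the sum of f over all blocks containing x equals zero (a zero-sum 3-flow); moreover if ρ is even the values can be taken in {-1,1} (a zero-sum 2-flow). -/

import Mathlib

/-- Alternating sequence 1, -1, 1, -1, ... -/
private def zsA : ℕ → ℤ := fun n => if Even n then 1 else -1

private lemma zsA_sum (n : ℕ) :
    ∑ j ∈ Finset.range n, zsA j = if Even n then 0 else 1 := by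
  induction n with
  | zero => simp
  | succ m ih =>
    rw [Finset.sum_range_succ, ih, zsA]
    rcases Nat.even_or_odd m with h | h
    · simp [h, Nat.even_add_one, Nat.not_even_iff_odd, h.add_one]
    · simp [Nat.not_even_iff_odd.2 h, Nat.even_add_one, Nat.not_even_iff_odd, h]

/-- Key lemma: if weights are constant on resolution classes and sum to zero,
the induced flow has zero sum at every point. -/
private lemma zs_key {v b ρ α : ℕ} (B : Fin b → Finset (Fin v)) (c : Fin b → Fin ρ)
    (hres : ∀ (j : Fin ρ) (x : Fin v),
      (Finset.univ.filter (fun i => c i = j ∧ x ∈ B i)).card = α)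
    (w : Fin ρ → ℤ) (hw : ∑ j, w j = 0) (x : Fin v) :
    ∑ i ∈ Finset.univ.filter (fun i => x ∈ B i), w (c i) = 0 := by
  rw [← Finset.sum_fiberwise (Finset.univ.filter (fun i => x ∈ B i)) c (fun i => w (c i))]
  have h2 : ∀ j : Fin ρ,
      ∑ i ∈ (Finset.univ.filter (fun i => x ∈ B i)).filter (fun i => c i = j), w (c i)
        = (α : ℤ) * w j := by
    intro j
    have hcongr : ∀ i ∈ (Finset.univ.filter (fun i => x ∈ B i)).filter (fun i => c i = j),
        w (c i) = w j := by
      intro i hi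
      simp only [Finset.mem_filter] at hi
      rw [hi.2]
    rw [Finset.sum_congr rfl hcongr, Finset.sum_const]
    have hcard : ((Finset.univ.filter (fun i => x ∈ B i)).filter (fun i => c i = j)).card = α := by
      rw [Finset.filter_filter]
      rw [← hres j x]
      congr 1
      ext i
      simp [and_comm]
    rw [hcard]
    simp [mul_comm]
  rw [Finset.sum_congr rfl (fun j _ => h2 j), ← Finset.mul_sum, hw, mul_zero]

/-- An α-resolvable 2-(v,k,λ) design with ρ ≥ 2 resolution classes
admits a zero-sum 3-flow; if ρ is even it admits a zero-sum 2-flow. -/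
theorem stmt0 (v b k lam α ρ : ℕ) (hρ : 2 ≤ ρ)
    (B : Fin b → Finset (Fin v))
    (hcard : ∀ i, (B i).card = k)
    (hpair : ∀ x y : Fin v, x ≠ y →
      (Finset.univ.filter (fun i => x ∈ B i ∧ y ∈ B i)).card = lam)
    (c : Fin b → Fin ρ)
    (hres : ∀ (j : Fin ρ) (x : Fin v),
      (Finset.univ.filter (fun i => c i = j ∧ x ∈ B i)).card = α) :
    (∃ f : Fin b → ℤ, (∀ i, f i ≠ 0 ∧ |f i| ≤ 2) ∧
      ∀ x : Fin v, ∑ i ∈ Finset.univ.filter (fun i => x ∈ B i), f i = 0) ∧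
    (Even ρ → ∃ f : Fin b → ℤ, (∀ i, f i = 1 ∨ f i = -1) ∧
      ∀ x : Fin v, ∑ i ∈ Finset.univ.filter (fun i => x ∈ B i), f i = 0) := by
  -- Even case weights
  have even_case : Even ρ → ∃ f : Fin b → ℤ, (∀ i, f i = 1 ∨ f i = -1) ∧
      ∀ x : Fin v, ∑ i ∈ Finset.univ.filter (fun i => x ∈ B i), f i = 0 := by
    intro hev
    refine ⟨fun i => zsA (c i).val, ?_, ?_⟩
    · intro i
      dsimp only [zsA]
      split_ifs <;> simp
    · intro x
      have hsum : ∑ j : Fin ρ, zsA j.val = 0 := by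
        rw [Fin.sum_univ_eq_sum_range, zsA_sum, if_pos hev]
      exact zs_key B c hres (fun j => zsA j.val) hsum x
  refine ⟨?_, even_case⟩
  rcases Nat.even_or_odd ρ with hev | hodd
  · obtain ⟨f, hf1, hf2⟩ := even_case hev
    refine ⟨f, fun i => ?_, hf2⟩
    rcases hf1 i with h | h <;> rw [h] <;> norm_num
  · -- odd case: weights 2, -1, then -zsA on indices ≥ 2
    set W : ℕ → ℤ := fun j => if j = 0 then 2 else if j = 1 then -1 else -zsA j with hW
    have hWsum : ∑ j ∈ Finset.range ρ, W j = 0 := by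
      have hsplit : ∑ j ∈ Finset.range ρ, W j
          = ∑ j ∈ Finset.range 2, W j + ∑ j ∈ Finset.Ico 2 ρ, W j := by
        rw [Finset.range_eq_Ico, ← Finset.sum_Ico_consecutive _ (Nat.zero_le 2) hρ, Finset.range_eq_Ico]
      have htail : ∑ j ∈ Finset.Ico 2 ρ, W j = ∑ j ∈ Finset.Ico 2 ρ, -zsA j := by
        refine Finset.sum_congr rfl fun j hj => ?_
        simp only [Finset.mem_Ico] at hj
        simp only [hW]
        rw [if_neg (by omega), if_neg (by omega)]
      have htail2 : ∑ j ∈ Finset.Ico 2 ρ, -zsA j = -1 := by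
        have := Finset.sum_Ico_eq_sub (fun j => -zsA j) hρ
        rw [this]
        simp only [Finset.sum_neg_distrib]
        rw [zsA_sum, zsA_sum]
        rw [if_neg (Nat.not_even_iff_odd.2 hodd)]
        norm_num
      rw [hsplit, htail, htail2]
      simp [hW, Finset.sum_range_succ]
    refine ⟨fun i => W (c i).val, ?_, ?_⟩
    · intro i
      simp only [hW]
      split_ifs with h1 h2
      · norm_num
      · norm_num
      · unfold zsA; split_ifs <;> norm_num
    · intro x
      have hsum : ∑ j : Fin ρ, W j.val = 0 := by
        rw [Fin.sum_univ_eq_sum_range]; exact hWsum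
      exact zs_key B c hres (fun j => W j.val) hsum x
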